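/- Let X be a compact connected metric space with at least two points such that for every ε > 0 there exists δ > 0 such that any two points x, y with dist(x,y) < δ both belong to some connected subset of X of diameter < ε. Let F : X ≃ₜ X be a homeomorphism and μ a Borel measure on X with μ(V) > 0 for every nonempty open set V. Suppose F has infinitely many sinks: there is a sequence (γ_j)_{j∈ℕ} of topological sinks of F (each with some trapping neighborhood) whose orbits O(γ_j) are pairwise disjoint. Then no Milnor attractor A of F is asymptotically stable; that is, it is not the case that A is Lyapunov stable for F and there exists ε > 0 such that every x with dist(x, A) < ε satisfies dist(F^[n](x), A) → 0 as n → ∞. (Abstract form of Okunev's theorem: infinitely many sinks preclude asymptotic stability of the Milnor attractor.) -/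

import Mathlib

open Set Function Filter Topology MeasureTheory

/-- The ω-limit set of `x` under `F`: `⋂_N closure {F^[n] x : n ≥ N}`. -/
def omegaSet {X : Type*} [TopologicalSpace X] (F : X → X) (x : X) : Set X :=
  ⋂ N : ℕ, closure ((fun n => F^[n] x) '' Set.Ici N)

/-- Lyapunov stability of a set `K` for the map `F`. -/
def IsLyapunovStable {X : Type*} [TopologicalSpace X] (F : X → X) (K : Set X) : Prop :=
  ∀ V : Set X, IsOpen V → K ⊆ V →
    ∃ W : Set X, IsOpen W ∧ K ⊆ W ∧ ∀ x ∈ W, ∀ n : ℕ, F^[n] x ∈ V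

/-- The (forward) orbit of a point; for a periodic point with `F^[m] γ = γ`, `m ≥ 1`,
this coincides with `{F^[i] γ : 0 ≤ i < m}`. -/
def orbitSet {X : Type*} (F : X → X) (γ : X) : Set X := Set.range fun i : ℕ => F^[i] γ

/-- `γ` is a periodic topological sink of `F` with trapping neighborhood `U`. -/
def IsTopSink {X : Type*} [TopologicalSpace X] (F : X → X) (γ : X) (U : Set X) : Prop :=
  (∃ m : ℕ, 1 ≤ m ∧ F^[m] γ = γ) ∧ IsOpen U ∧ orbitSet F γ ⊆ U ∧
    F '' closure U ⊆ U ∧ (⋂ n : ℕ, F^[n] '' U) = orbitSet F γ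

/-- `A` is the Milnor attractor of `F` w.r.t. the measure `μ`. -/
def IsMilnorAttractor {X : Type*} [TopologicalSpace X] [MeasurableSpace X]
    (μ : Measure X) (F : X → X) (A : Set X) : Prop :=
  IsClosed A ∧ (∀ᵐ x ∂μ, omegaSet F x ⊆ A) ∧
    ∀ A' : Set X, IsClosed A' → (∀ᵐ x ∂μ, omegaSet F x ⊆ A') → A ⊆ A'

section Aux
variable {X : Type*} [TopologicalSpace X]

lemma omegaSet_nonempty [CompactSpace X] (F : X → X) (x : X) :
    (omegaSet F x).Nonempty := by
  apply IsCompact.nonempty_iInter_of_sequence_nonempty_isCompact_isClosed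
  · intro i
    exact closure_mono (Set.image_mono (Set.Ici_subset_Ici.2 (Nat.le_succ i)))
  · intro i
    exact (Set.Nonempty.image _ Set.nonempty_Ici).closure
  · exact isClosed_closure.isCompact
  · intro i; exact isClosed_closure

-- preconnected frontier lemma
lemma IsPreconnected.inter_frontier_nonempty' {s t : Set X} (hs : IsPreconnected s)
    (h1 : (s ∩ t).Nonempty) (h2 : (s \ t).Nonempty) : (s ∩ frontier t).Nonempty := by
  by_contra h
  rw [Set.not_nonempty_iff_eq_empty] at h
  have hfr : ∀ x ∈ s, x ∉ frontier t := by
    intro x hxs hxf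
    have hx' : x ∈ s ∩ frontier t := ⟨hxs, hxf⟩
    rw [h] at hx'
    exact absurd hx' (Set.notMem_empty x)
  have key := hs (interior t) (closure t)ᶜ isOpen_interior (isClosed_closure.isOpen_compl)
  have hsub : s ⊆ interior t ∪ (closure t)ᶜ := by
    intro x hxs
    by_cases hx : x ∈ closure t
    · by_cases hxi : x ∈ interior t
      · exact Or.inl hxi
      · exact absurd ⟨hx, hxi⟩ (hfr x hxs)
    · exact Or.inr hx
  have hne1 : (s ∩ interior t).Nonempty := by
    obtain ⟨x, hxs, hxt⟩ := h1
    refine ⟨x, hxs, ?_⟩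
    by_cases hxi : x ∈ interior t
    · exact hxi
    · exact absurd ⟨subset_closure hxt, hxi⟩ (hfr x hxs)
  have hne2 : (s ∩ (closure t)ᶜ).Nonempty := by
    obtain ⟨x, hxs, hxt⟩ := h2
    refine ⟨x, hxs, fun hxc => ?_⟩
    exact hfr x hxs ⟨hxc, fun hxi => hxt (interior_subset hxi)⟩
  obtain ⟨x, -, hx1, hx2⟩ := key hsub hne1 hne2
  exact hx2 (subset_closure (interior_subset hx1))

variable (F : X ≃ₜ X)

lemma iterate_image_closure (n : ℕ) (S : Set X) :
    (⇑F)^[n] '' closure S = closure ((⇑F)^[n] '' S) := by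
  induction n with
  | zero => simp
  | succ n ih =>
    rw [Function.iterate_succ', Set.image_comp, Set.image_comp, ih, F.image_closure]

lemma iterate_image_subset_self {U : Set X} (hFU : ⇑F '' closure U ⊆ U) (n : ℕ) :
    (⇑F)^[n] '' U ⊆ U := by
  induction n with
  | zero => simp
  | succ n ih =>
    rw [Function.iterate_succ', Set.image_comp]
    exact (Set.image_mono ih).trans
      ((Set.image_mono subset_closure).trans hFU)

/-- main trapping lemma: if some iterate of x lies in U, ω(x) ⊆ ⋂ F^n '' U. -/
lemma omegaSet_subset_iInter {U : Set X} (hFU : ⇑F '' closure U ⊆ U) {x : X} {m : ℕ}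
    (hx : (⇑F)^[m] x ∈ U) : omegaSet ⇑F x ⊆ ⋂ n : ℕ, (⇑F)^[n] '' U := by
  refine Set.subset_iInter fun n => ?_
  have h1 : omegaSet ⇑F x ⊆ closure ((fun k => (⇑F)^[k] x) '' Set.Ici (m + n + 1)) :=
    Set.iInter_subset _ _
  refine h1.trans ?_
  have h2 : (fun k => (⇑F)^[k] x) '' Set.Ici (m + n + 1) ⊆ (⇑F)^[n + 1] '' U := by
    rintro - ⟨k, hk, rfl⟩
    simp only [Set.mem_Ici] at hk
    show (⇑F)^[k] x ∈ _
    obtain ⟨j, rfl⟩ : ∃ j, k = ((n + 1) + j) + m := ⟨k - m - n - 1, by omega⟩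
    rw [Function.iterate_add_apply, Function.iterate_add_apply]
    exact Set.mem_image_of_mem _ (iterate_image_subset_self F hFU _ (Set.mem_image_of_mem _ hx))
  refine (closure_mono h2).trans ?_
  rw [← iterate_image_closure]
  rw [Function.iterate_succ, Set.image_comp]
  exact Set.image_mono hFU

lemma omegaSet_forward_inv {x y : X} (hy : y ∈ omegaSet ⇑F x) (m : ℕ) :
    (⇑F)^[m] y ∈ omegaSet ⇑F x := by
  induction m with
  | zero => simpa
  | succ m ih =>
    rw [Function.iterate_succ', Function.comp_apply]
    simp only [omegaSet, Set.mem_iInter] at ih ⊢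
    intro N
    have := ih N
    have h2 : ⇑F '' closure ((fun n => (⇑F)^[n] x) '' Set.Ici N)
        ⊆ closure ((fun n => (⇑F)^[n] x) '' Set.Ici N) := by
      rw [F.image_closure]
      refine closure_mono ?_
      rintro - ⟨-, ⟨k, hk, rfl⟩, rfl⟩
      exact ⟨k + 1, le_trans hk (Nat.le_succ k), by simp [Function.iterate_succ_apply']⟩
    exact h2 (Set.mem_image_of_mem _ this)

lemma orbitSet_finite {γ : X} {m : ℕ} (hm : 1 ≤ m) (hγ : (⇑F)^[m] γ = γ) :
    (orbitSet ⇑F γ).Finite := by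
  have key : ∀ i : ℕ, (⇑F)^[i] γ ∈ (fun i : ℕ => (⇑F)^[i] γ) '' Set.Iio m := by
    intro i
    induction i using Nat.strong_induction_on with
    | _ i ih =>
      by_cases hi : i < m
      · exact ⟨i, hi, rfl⟩
      · have : i = (i - m) + m := by omega
        rw [this, Function.iterate_add_apply, hγ]
        exact ih (i - m) (by omega)
  have : orbitSet ⇑F γ ⊆ (fun i : ℕ => (⇑F)^[i] γ) '' Set.Iio m := by
    rintro - ⟨i, rfl⟩; exact key i
  exact ((Set.finite_Iio m).image _).subset this

end Aux

/-- Abstract form of Okunev's theorem: a homeomorphism of a compact connected metric space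
(with a uniform local connectedness property, and at least two points) carrying infinitely
many topological sinks with pairwise disjoint orbits has no asymptotically stable Milnor
attractor. -/
theorem stmt1 {X : Type*} [MetricSpace X] [CompactSpace X] [ConnectedSpace X] [Nontrivial X]
    [MeasurableSpace X] [BorelSpace X]
    (hlc : ∀ ε : ℝ, 0 < ε → ∃ δ : ℝ, 0 < δ ∧ ∀ x y : X, dist x y < δ →
      ∃ C : Set X, IsConnected C ∧ x ∈ C ∧ y ∈ C ∧ Metric.diam C < ε)
    (F : X ≃ₜ X) (μ : Measure X)
    (hμ : ∀ V : Set X, IsOpen V → V.Nonempty → 0 < μ V)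
    (γseq : ℕ → X) (Useq : ℕ → Set X)
    (hsinks : ∀ j, IsTopSink (⇑F) (γseq j) (Useq j))
    (hdisj : ∀ i j, i ≠ j → Disjoint (orbitSet (⇑F) (γseq i)) (orbitSet (⇑F) (γseq j)))
    (A : Set X) (hA : IsMilnorAttractor μ (⇑F) A) :
    ¬ (IsLyapunovStable (⇑F) A ∧ ∃ ε : ℝ, 0 < ε ∧ ∀ x : X, Metric.infDist x A < ε →
        Tendsto (fun n => Metric.infDist ((⇑F)^[n] x) A) atTop (nhds 0)) := by
  rintro ⟨hst, ε, hε, hatt⟩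
  have hUopen : ∀ j, IsOpen (Useq j) := fun j => (hsinks j).2.1
  have hFU : ∀ j, ⇑F '' closure (Useq j) ⊆ Useq j := fun j => (hsinks j).2.2.2.1
  have horbU : ∀ j, orbitSet ⇑F (γseq j) ⊆ Useq j := fun j => (hsinks j).2.2.1
  have hiU : ∀ j, (⋂ n : ℕ, (⇑F)^[n] '' (Useq j)) = orbitSet ⇑F (γseq j) :=
    fun j => (hsinks j).2.2.2.2
  have hωorb : ∀ j x, (∃ m, (⇑F)^[m] x ∈ Useq j) →
      omegaSet ⇑F x ⊆ orbitSet ⇑F (γseq j) := by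
    rintro j x ⟨m, hm⟩
    rw [← hiU j]
    exact omegaSet_subset_iInter F (hFU j) hm
  set Bas : ℕ → Set X := fun j => {x | ∃ m : ℕ, (⇑F)^[m] x ∈ Useq j} with hBasdef
  have hBasOpen : ∀ j, IsOpen (Bas j) := by
    intro j
    have heq : Bas j = ⋃ m : ℕ, (⇑F)^[m] ⁻¹' (Useq j) := by
      ext x; simp [hBasdef]
    rw [heq]
    exact isOpen_iUnion fun m => (hUopen j).preimage (F.continuous.iterate m)
  have hBasDisj : ∀ i j, i ≠ j → ∀ x, x ∈ Bas i → x ∈ Bas j → False := by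
    intro i j hij x hxi hxj
    obtain ⟨y, hy⟩ := omegaSet_nonempty ⇑F x
    exact Set.disjoint_left.1 (hdisj i j hij) (hωorb i x hxi hy) (hωorb j x hxj hy)
  have hωout : ∀ j x, x ∉ Bas j → ∀ y ∈ omegaSet ⇑F x, y ∉ Bas j := by
    intro j x hx y hy hyB
    obtain ⟨m, hm⟩ := hyB
    have h1 : (⇑F)^[m] y ∈ omegaSet ⇑F x := omegaSet_forward_inv F hy m
    simp only [omegaSet, Set.mem_iInter] at h1
    have h2 := h1 0
    obtain ⟨z, hzU, hzim⟩ := mem_closure_iff.1 h2 (Useq j) (hUopen j) hm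
    obtain ⟨k, -, rfl⟩ := hzim
    exact hx ⟨k, hzU⟩
  -- a point of A on each sink orbit
  have haj : ∀ j, ∃ a, a ∈ A ∧ a ∈ orbitSet ⇑F (γseq j) := by
    intro j
    have hUne : (Useq j).Nonempty := ⟨γseq j, horbU j ⟨0, rfl⟩⟩
    have hex : ∃ x, x ∈ Useq j ∧ omegaSet ⇑F x ⊆ A := by
      by_contra hno
      push_neg at hno
      have hsub : Useq j ⊆ {x | ¬ (omegaSet ⇑F x ⊆ A)} := fun x hx => hno x hx
      have h0 : μ {x | ¬ (omegaSet ⇑F x ⊆ A)} = 0 := ae_iff.1 hA.2.1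
      exact absurd (measure_mono_null hsub h0) (hμ (Useq j) (hUopen j) hUne).ne'
    obtain ⟨x, hxU, hxA⟩ := hex
    obtain ⟨y, hy⟩ := omegaSet_nonempty ⇑F x
    exact ⟨y, hxA hy, hωorb j x ⟨0, hxU⟩ hy⟩
  choose a haA haOrb using haj
  have haBas : ∀ j, a j ∈ Bas j := fun j =>
    ⟨0, by rw [Function.iterate_zero_apply]; exact horbU j (haOrb j)⟩
  -- cluster point of the sequence of sink points
  obtain ⟨p, -, φ, hφ, hconv⟩ := isCompact_univ.tendsto_subseq (fun j => Set.mem_univ (a j))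
  have hpBas : ∀ k, p ∉ Bas k := by
    intro k hpk
    have hev : ∀ᶠ i in atTop, (a ∘ φ) i ∈ Bas k :=
      hconv.eventually ((hBasOpen k).mem_nhds hpk)
    obtain ⟨i, hi⟩ := hev.exists
    obtain ⟨i2, hi2, h12⟩ := (hev.and (Filter.eventually_gt_atTop i)).exists
    have e1 : φ i = k := by
      by_contra hne
      exact hBasDisj (φ i) k hne (a (φ i)) (haBas (φ i)) hi
    have e2 : φ i2 = k := by
      by_contra hne
      exact hBasDisj (φ i2) k hne (a (φ i2)) (haBas (φ i2)) hi2
    exact (ne_of_lt (hφ h12)) (e1.trans e2.symm)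
  -- uniform local connectedness at scale ε/2
  have hε2 : (0:ℝ) < ε / 2 := by linarith
  obtain ⟨δ, hδ, hlcδ⟩ := hlc (ε / 2) hε2
  obtain ⟨Nd, hNd⟩ := Metric.tendsto_atTop.1 hconv δ hδ
  have hi0 : dist (a (φ Nd)) p < δ := hNd Nd le_rfl
  set J := φ Nd with hJdef
  obtain ⟨C, hCconn, haC, hpC, hCdiam⟩ := hlcδ (a J) p hi0
  -- minimality: A ∩ Bas J ⊆ orbit J
  obtain ⟨m0, hm01, hm02⟩ := (hsinks J).1
  have hfin : (orbitSet ⇑F (γseq J)).Finite := orbitSet_finite F hm01 hm02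
  have hmin : ∀ y, y ∈ A → y ∈ Bas J → y ∈ orbitSet ⇑F (γseq J) := by
    set A' := (A \ Bas J) ∪ orbitSet ⇑F (γseq J) with hA'def
    have hA'c : IsClosed A' :=
      (hA.1.inter (hBasOpen J).isClosed_compl).union hfin.isClosed
    have hae : ∀ᵐ x ∂μ, omegaSet ⇑F x ⊆ A' := by
      refine hA.2.1.mono fun x hx => ?_
      by_cases hxB : x ∈ Bas J
      · exact (hωorb J x hxB).trans Set.subset_union_right
      · intro y hy
        exact Or.inl ⟨hx hy, hωout J x hxB y hy⟩
    have hsub := hA.2.2 A' hA'c hae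
    intro y hyA hyB
    rcases hsub hyA with h | h
    · exact absurd hyB h.2
    · exact h
  -- A misses the frontier of U_J
  have hAfr : ∀ y ∈ A, y ∉ frontier (Useq J) := by
    intro y hyA hyf
    have hyB : y ∈ Bas J := by
      refine ⟨1, ?_⟩
      rw [Function.iterate_one]
      exact hFU J (Set.mem_image_of_mem _ (frontier_subset_closure hyf))
    have hyU : y ∈ Useq J := horbU J (hmin y hyA hyB)
    exact hyf.2 (by rw [(hUopen J).interior_eq]; exact hyU)
  have hAne : A.Nonempty := ⟨a J, (haA J)⟩
  have hAcomp : IsCompact A := hA.1.isCompact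
  obtain ⟨d, hd, hdsub⟩ := hAcomp.exists_thickening_subset_open
    (isClosed_frontier.isOpen_compl) (fun y hy => hAfr y hy)
  -- uniform attraction
  obtain ⟨N, hNuni⟩ : ∃ N : ℕ, ∀ x : X, Metric.infDist x A ≤ ε / 2 →
      ∀ n, N ≤ n → Metric.infDist ((⇑F)^[n] x) A < d := by
    set V := {y : X | Metric.infDist y A < d} with hVdef
    have hVopen : IsOpen V := isOpen_lt (Metric.continuous_infDist_pt A) continuous_const
    have hAV : A ⊆ V := fun y hy => by
      simp only [hVdef, Set.mem_setOf_eq, Metric.infDist_zero_of_mem hy]; exact hd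
    obtain ⟨W, hWopen, hAW, hWorb⟩ := hst V hVopen hAV
    obtain ⟨τ, hτ, hτsub⟩ := hAcomp.exists_thickening_subset_open hWopen hAW
    have hKcl : IsClosed {x : X | Metric.infDist x A ≤ ε / 2} :=
      isClosed_le (Metric.continuous_infDist_pt A) continuous_const
    have hKcomp : IsCompact {x : X | Metric.infDist x A ≤ ε / 2} := hKcl.isCompact
    have hxW : ∀ x : X, ∃ n : ℕ, Metric.infDist x A ≤ ε / 2 → (⇑F)^[n] x ∈ W := by
      intro x
      by_cases hx : Metric.infDist x A ≤ ε / 2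
      · have h1 : Metric.infDist x A < ε := lt_of_le_of_lt hx (by linarith)
        have h3 : ∀ᶠ n in atTop, Metric.infDist ((⇑F)^[n] x) A < τ :=
          (hatt x h1).eventually (gt_mem_nhds hτ)
        obtain ⟨n, hn⟩ := h3.exists
        exact ⟨n, fun _ => hτsub ((Metric.mem_thickening_iff_infDist_lt hAne).2 hn)⟩
      · exact ⟨0, fun h => absurd h hx⟩
    choose nf hnf using hxW
    have hcover : {x : X | Metric.infDist x A ≤ ε / 2} ⊆ ⋃ x : X, (⇑F)^[nf x] ⁻¹' W :=
      fun x hx => Set.mem_iUnion.2 ⟨x, hnf x hx⟩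
    obtain ⟨t, ht⟩ := hKcomp.elim_finite_subcover _
      (fun x : X => hWopen.preimage (F.continuous.iterate (nf x))) hcover
    refine ⟨t.sup nf, fun x hxK n hn => ?_⟩
    obtain ⟨y, hyt, hyx⟩ := Set.mem_iUnion₂.1 (ht hxK)
    have hny : nf y ≤ n := le_trans (Finset.le_sup hyt) hn
    have h5 : (⇑F)^[(n - nf y) + nf y] x ∈ V := by
      rw [Function.iterate_add_apply]
      exact hWorb _ hyx (n - nf y)
    rw [Nat.sub_add_cancel hny] at h5
    exact h5
  -- every point of C is within ε/2 of A
  have hCclose : ∀ c ∈ C, Metric.infDist c A ≤ ε / 2 := by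
    intro c hc
    calc Metric.infDist c A ≤ dist c (a J) := Metric.infDist_le_dist_of_mem (haA J)
      _ ≤ Metric.diam C := Metric.dist_le_diam_of_mem Metric.isBounded_of_compactSpace hc haC
      _ ≤ ε / 2 := le_of_lt hCdiam
  -- the image of C at time N crosses the frontier of U_J
  have hSconn : IsPreconnected ((⇑F)^[N] '' C) :=
    (hCconn.image _ ((F.continuous.iterate N).continuousOn)).isPreconnected
  have h1 : (((⇑F)^[N] '' C) ∩ Useq J).Nonempty := by
    refine ⟨(⇑F)^[N] (a J), Set.mem_image_of_mem _ haC, ?_⟩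
    obtain ⟨i, hi⟩ := haOrb J
    refine horbU J ⟨N + i, ?_⟩
    show (⇑F)^[N + i] (γseq J) = (⇑F)^[N] (a J)
    rw [Function.iterate_add_apply]
    exact congrArg _ hi
  have h2 : (((⇑F)^[N] '' C) \ Useq J).Nonempty :=
    ⟨(⇑F)^[N] p, Set.mem_image_of_mem _ hpC, fun hmem => hpBas J ⟨N, hmem⟩⟩
  obtain ⟨z, hzS, hzfr⟩ := hSconn.inter_frontier_nonempty' h1 h2
  obtain ⟨c, hcC, rfl⟩ := hzS
  have hlt : Metric.infDist ((⇑F)^[N] c) A < d := hNuni c (hCclose c hcC) N le_rfl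
  have hthick : (⇑F)^[N] c ∈ Metric.thickening d A :=
    (Metric.mem_thickening_iff_infDist_lt hAne).2 hlt
  exact (hdsub hthick) hzfr
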